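/- Let X be a topological space and let 𝓕 be a family of closed subsets of X such that every member of 𝓕 is Lindelöf as a subspace of X. If X is 𝓕-regular, then X is 𝓕-normal. -/
import Mathlib


universe u

open Cardinal Set Topology

/-- `X` is `𝓕`-regular: any `F ∈ 𝓕` and point `x ∉ F` can be separated by disjoint open sets. -/
def FRegular (X : Type u) [TopologicalSpace X] (F : Set (Set X)) : Prop :=
  ∀ A ∈ F, ∀ x : X, x ∉ A → ∃ U V : Set X,
    IsOpen U ∧ IsOpen V ∧ A ⊆ U ∧ x ∈ V ∧ Disjoint U V

/-- `X` is strongly `𝓕`-regular: any `F ∈ 𝓕` and point `x ∉ F` can be separated by open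
sets with disjoint closures. -/
def StronglyFRegular (X : Type u) [TopologicalSpace X] (F : Set (Set X)) : Prop :=
  ∀ A ∈ F, ∀ x : X, x ∉ A → ∃ U V : Set X,
    IsOpen U ∧ IsOpen V ∧ A ⊆ U ∧ x ∈ V ∧ closure U ∩ closure V = ∅

/-- `X` is `𝓕`-normal: any two disjoint members of `𝓕` can be separated by disjoint open sets. -/
def FNormal (X : Type u) [TopologicalSpace X] (F : Set (Set X)) : Prop :=
  ∀ A ∈ F, ∀ B ∈ F, Disjoint A B → ∃ U V : Set X,
    IsOpen U ∧ IsOpen V ∧ A ⊆ U ∧ B ⊆ V ∧ Disjoint U V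

/-- `X` is strongly `𝓕`-normal: any two disjoint members of `𝓕` can be separated by
open sets with disjoint closures. -/
def StronglyFNormal (X : Type u) [TopologicalSpace X] (F : Set (Set X)) : Prop :=
  ∀ A ∈ F, ∀ B ∈ F, Disjoint A B → ∃ U V : Set X,
    IsOpen U ∧ IsOpen V ∧ A ⊆ U ∧ B ⊆ V ∧ closure U ∩ closure V = ∅

/-- `X` is totally `𝓕`-normal: any member of `𝓕` and any closed set disjoint from it can be
separated by disjoint open sets. -/
def TotallyFNormal (X : Type u) [TopologicalSpace X] (F : Set (Set X)) : Prop :=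
  ∀ A ∈ F, ∀ B : Set X, IsClosed B → Disjoint A B → ∃ U V : Set X,
    IsOpen U ∧ IsOpen V ∧ A ⊆ U ∧ B ⊆ V ∧ Disjoint U V

lemma lindelof_countable_cover {X : Type u} [TopologicalSpace X] {A B : Set X}
    (hA : IsLindelof A) (h : ∀ x ∈ A, ∃ V : Set X, IsOpen V ∧ x ∈ V ∧ closure V ∩ B = ∅) :
    ∃ V : ℕ → Set X, (∀ n, IsOpen (V n)) ∧ A ⊆ ⋃ n, V n ∧ ∀ n, closure (V n) ∩ B = ∅ := by
  choose V hVo hxV hVB using h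
  obtain ⟨t, htc, hsub⟩ := hA.elim_nhds_subcover' V (fun x hx => (hVo x hx).mem_nhds (hxV x hx))
  rcases t.eq_empty_or_nonempty with rfl | hne
  · refine ⟨fun _ => ∅, fun _ => isOpen_empty, ?_, fun _ => by simp⟩
    intro x hx; have := hsub hx; simp at this
  · obtain ⟨f, hf⟩ := htc.exists_eq_range hne
    refine ⟨fun n => V (f n) (f n).2, fun n => hVo _ _, ?_, fun n => hVB _ _⟩
    intro x hx
    obtain ⟨y, hyt, hy⟩ := mem_iUnion₂.1 (hsub hx)
    have : y ∈ range f := hf ▸ hyt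
    obtain ⟨n, rfl⟩ := this
    exact mem_iUnion.2 ⟨n, hy⟩

/-- If `𝓕` is a family of closed subsets of `X` whose members are Lindelöf subspaces of `X`
and `X` is `𝓕`-regular, then `X` is `𝓕`-normal. -/
theorem fnormal_of_fregular {X : Type u} [TopologicalSpace X] (F : Set (Set X))
    (hclosed : ∀ A ∈ F, IsClosed A) (hLind : ∀ A ∈ F, IsLindelof A)
    (hreg : FRegular X F) : FNormal X F := by
  intro A hA B hB hAB
  have key : ∀ (S T : Set X), T ∈ F → Disjoint S T →
      ∀ x ∈ S, ∃ V : Set X, IsOpen V ∧ x ∈ V ∧ closure V ∩ T = ∅ := by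
    intro S T hT hST x hx
    have hxT : x ∉ T := fun hxt => (hST.ne_of_mem hx hxt) rfl
    obtain ⟨U, V, hUo, hVo, hTU, hxV, hUV⟩ := hreg T hT x hxT
    refine ⟨V, hVo, hxV, ?_⟩
    have hVc : closure V ⊆ Uᶜ :=
      closure_minimal (fun z hz hzU => hUV.ne_of_mem hzU hz rfl) hUo.isClosed_compl
    apply eq_empty_of_forall_notMem
    rintro z ⟨hz1, hz2⟩
    exact hVc hz1 (hTU hz2)
  obtain ⟨V, hVo, hAV, hVB⟩ := lindelof_countable_cover (hLind A hA)
    (key A B hB hAB)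
  obtain ⟨W, hWo, hBW, hWA⟩ := lindelof_countable_cover (hLind B hB)
    (key B A hA hAB.symm)
  refine ⟨⋃ n, V n \ ⋃ k ∈ Finset.range (n+1), closure (W k),
          ⋃ n, W n \ ⋃ k ∈ Finset.range (n+1), closure (V k), ?_, ?_, ?_, ?_, ?_⟩
  · exact isOpen_iUnion fun n => (hVo n).sdiff
      (isClosed_biUnion_finset fun k _ => isClosed_closure)
  · exact isOpen_iUnion fun n => (hWo n).sdiff
      (isClosed_biUnion_finset fun k _ => isClosed_closure)
  · intro x hx
    obtain ⟨n, hn⟩ := mem_iUnion.1 (hAV hx)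
    refine mem_iUnion.2 ⟨n, hn, ?_⟩
    intro hmem
    obtain ⟨k, _, hk⟩ := mem_iUnion₂.1 hmem
    exact (eq_empty_iff_forall_notMem.1 (hWA k) x) ⟨hk, hx⟩
  · intro x hx
    obtain ⟨n, hn⟩ := mem_iUnion.1 (hBW hx)
    refine mem_iUnion.2 ⟨n, hn, ?_⟩
    intro hmem
    obtain ⟨k, _, hk⟩ := mem_iUnion₂.1 hmem
    exact (eq_empty_iff_forall_notMem.1 (hVB k) x) ⟨hk, hx⟩
  · rw [Set.disjoint_left]
    rintro z hz1 hz2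
    obtain ⟨n, hzn, hzn'⟩ := mem_iUnion.1 hz1
    obtain ⟨m, hzm, hzm'⟩ := mem_iUnion.1 hz2
    rcases le_or_gt n m with h | h
    · exact hzm' (mem_iUnion₂.2 ⟨n, Finset.mem_range.2 (Nat.lt_succ_of_le h),
        subset_closure hzn⟩)
    · exact hzn' (mem_iUnion₂.2 ⟨m, Finset.mem_range.2 (Nat.lt_succ_of_lt h),
        subset_closure hzm⟩)
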